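/- Let a1, a2, a3 ∈ (0, 1/2] and suppose there exists q > 0 such that (x1, x2, x3) = (q*sqrt(a2+a3), q*sqrt(a1+a3), q*sqrt(a1+a2)) satisfies system (S) (this is exactly the condition that the corresponding singular point of the reduced planar Ricci flow system has σ = ρ^2 - 4δ = 0). Then one of the following holds: (i) a1 = a2 = a3; or (ii) there exist s with sqrt(2*sqrt(2) - 2)/2 < s < sqrt(2)/2 and indices {i,j,k} = {1,2,3} such that a_i = a_j = (2*s^2 - 1)^2/(8*s^2) and a_k = (4*s^4 + 4*s^2 - 1)/(8*s^2). -/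

import Mathlib

noncomputable section
open Real Set

/-- First equation of system (S). -/
def eqS1 (a1 a2 a3 x1 x2 x3 : ℝ) : Prop :=
  (a2 + a3)*(a1*x2^2 + a1*x3^2 - x2*x3) + (a2*x2 + a3*x3)*x1
    - (a1*a2 + a1*a3 + 2*a2*a3)*x1^2 = 0

/-- Second equation of system (S). -/
def eqS2 (a1 a2 a3 x1 x2 x3 : ℝ) : Prop :=
  (a1 + a3)*(a2*x1^2 + a2*x3^2 - x1*x3) + (a1*x1 + a3*x3)*x2
    - (a1*a2 + 2*a1*a3 + a2*a3)*x2^2 = 0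

private lemma sq_lt_aux (x y : ℝ) (hx : 0 ≤ x) (hy : 0 < y) (h : x^2 < y^2) : x < y := by
  nlinarith

set_option maxHeartbeats 1000000 in
private lemma G_lemma (a c : ℝ) (ha0 : 0 < a) (hc0 : 0 < c) (hc2 : c ≤ 1/2)
    (hG : 2*a = (a+c)*(1+2*(a-c))^2) (hne : a ≠ c) :
    ∃ s : ℝ, Real.sqrt (2*Real.sqrt 2 - 2)/2 < s ∧ s < Real.sqrt 2/2 ∧
      a = (2*s^2 - 1)^2/(8*s^2) ∧ c = (4*s^4 + 4*s^2 - 1)/(8*s^2) := by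
  have hdne : a - c ≠ 0 := sub_ne_zero.mpr hne
  have hdpos : (0:ℝ) < 1 + (a - c) := by linarith
  have hdlow : -(1:ℝ)/2 < a - c := by linarith
  set r := Real.sqrt (1+(a-c)) with hr
  have hsq : r^2 = 1+(a-c) := Real.sq_sqrt hdpos.le
  have hrpos : 0 < r := Real.sqrt_pos.mpr hdpos
  set s := 1/(2*r) with hs
  have hspos : 0 < s := by positivity
  have hs2 : s^2 = 1/(4*(1+(a-c))) := by
    rw [hs, div_pow, one_pow, mul_pow, hsq]; ring
  have h8 : 8*a*(1+(a-c)) = (1+2*(a-c))^2 := by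
    have h0 : (a-c) * (8*a*(1+(a-c)) - (1+2*(a-c))^2) = 0 := by linear_combination (-1)*hG
    have := (mul_eq_zero.mp h0).resolve_left hdne
    linarith
  have h8c : 8*c*(1+(a-c)) = 1 - 4*(a-c) - 4*(a-c)^2 := by linear_combination h8
  have hcineq : 0 < 1 - 4*(a-c) - 4*(a-c)^2 := by nlinarith
  have h2sq : Real.sqrt 2^2 = 2 := Real.sq_sqrt (by norm_num)
  have h2pos : 0 < Real.sqrt 2 := Real.sqrt_pos.mpr (by norm_num)
  have h2gt1 : 1 < Real.sqrt 2 := by nlinarith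
  have hne1d : (1:ℝ) + (a-c) ≠ 0 := ne_of_gt hdpos
  have hs2' : s^2*(4*(1+(a-c))) = 1 := by rw [hs2]; field_simp
  have hsgt : Real.sqrt (2*Real.sqrt 2 - 2)/2 < s := by
    have ht : 2*(a-c) + 1 < Real.sqrt 2 := by
      apply sq_lt_aux _ _ (by linarith) h2pos
      nlinarith [h2sq, hcineq]
    have hnn : (0:ℝ) ≤ 2*Real.sqrt 2 - 2 := by nlinarith
    have hL : (Real.sqrt (2*Real.sqrt 2 - 2))^2 = 2*Real.sqrt 2 - 2 := Real.sq_sqrt hnn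
    have hX : (2*Real.sqrt 2 - 2)*(1+(a-c)) < 1 := by
      nlinarith [mul_pos (sub_pos.mpr h2gt1) (sub_pos.mpr ht), h2sq]
    have hgoal : 2*Real.sqrt 2 - 2 < 4*s^2 := by
      nlinarith [hX, hs2', hdpos]
    apply sq_lt_aux _ _ (by positivity) hspos
    nlinarith [hL, hgoal]
  have hslt : s < Real.sqrt 2/2 := by
    apply sq_lt_aux _ _ hspos.le (by positivity)
    nlinarith [hs2', h2sq, hdlow,
      mul_pos (mul_pos hspos hspos) (show (0:ℝ) < 4*(1+(a-c)) - 2 by linarith)]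
  have hsa : a = (2*s^2 - 1)^2/(8*s^2) := by
    rw [eq_div_iff (by positivity : (8:ℝ)*s^2 ≠ 0), hs2]
    field_simp
    linear_combination 4*h8
  have hsc : c = (4*s^4 + 4*s^2 - 1)/(8*s^2) := by
    have hs4 : s^4 = (1/(4*(1+(a-c))))^2 := by
      rw [show s^4 = (s^2)^2 by ring, hs2]
    rw [eq_div_iff (by positivity : (8:ℝ)*s^2 ≠ 0), hs4, hs2]
    field_simp
    linear_combination h8c
  exact ⟨s, hsgt, hslt, hsa, hsc⟩

set_option maxHeartbeats 1000000 in
theorem sigma_zero_parameter_classification (a1 a2 a3 : ℝ)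
    (ha1 : a1 ∈ Ioc (0:ℝ) (1/2)) (ha2 : a2 ∈ Ioc (0:ℝ) (1/2)) (ha3 : a3 ∈ Ioc (0:ℝ) (1/2))
    (h : ∃ q : ℝ, 0 < q ∧
      eqS1 a1 a2 a3 (q * Real.sqrt (a2 + a3)) (q * Real.sqrt (a1 + a3)) (q * Real.sqrt (a1 + a2)) ∧
      eqS2 a1 a2 a3 (q * Real.sqrt (a2 + a3)) (q * Real.sqrt (a1 + a3)) (q * Real.sqrt (a1 + a2))) :
    (a1 = a2 ∧ a2 = a3) ∨
    (∃ s : ℝ, Real.sqrt (2*Real.sqrt 2 - 2)/2 < s ∧ s < Real.sqrt 2/2 ∧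
      ((a1 = (2*s^2 - 1)^2/(8*s^2) ∧ a2 = (2*s^2 - 1)^2/(8*s^2) ∧
          a3 = (4*s^4 + 4*s^2 - 1)/(8*s^2)) ∨
       (a1 = (2*s^2 - 1)^2/(8*s^2) ∧ a3 = (2*s^2 - 1)^2/(8*s^2) ∧
          a2 = (4*s^4 + 4*s^2 - 1)/(8*s^2)) ∨
       (a2 = (2*s^2 - 1)^2/(8*s^2) ∧ a3 = (2*s^2 - 1)^2/(8*s^2) ∧
          a1 = (4*s^4 + 4*s^2 - 1)/(8*s^2)))) := by
  obtain ⟨ha1p, ha1h⟩ := ha1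
  obtain ⟨ha2p, ha2h⟩ := ha2
  obtain ⟨ha3p, ha3h⟩ := ha3
  obtain ⟨q, hq, hS1, hS2⟩ := h
  set u := Real.sqrt (a2 + a3) with hu_def
  set v := Real.sqrt (a1 + a3) with hv_def
  set w := Real.sqrt (a1 + a2) with hw_def
  have hu : u^2 = a2 + a3 := Real.sq_sqrt (by linarith)
  have hv : v^2 = a1 + a3 := Real.sq_sqrt (by linarith)
  have hw : w^2 = a1 + a2 := Real.sq_sqrt (by linarith)
  have hup : 0 < u := Real.sqrt_pos.mpr (by linarith)
  have hvp : 0 < v := Real.sqrt_pos.mpr (by linarith)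
  have hwp : 0 < w := Real.sqrt_pos.mpr (by linarith)
  rw [eqS1] at hS1
  rw [eqS2] at hS2
  -- reduced equations
  have he1 : u*(v*w + 2*a2*a3 - 2*a1^2) - (a2*v + a3*w) = 0 := by
    have hmul : (q^2*u) * (u*(v*w + 2*a2*a3 - 2*a1^2) - (a2*v + a3*w)) = 0 := by
      linear_combination (-1)*hS1
        + (q^2*(v*w + 2*a2*a3 - 2*a1^2 - (a1*a2 + a1*a3 + 2*a2*a3)))*hu
        + (q^2*(a1*(a2+a3)))*hv + (q^2*(a1*(a2+a3)))*hw
    exact (mul_eq_zero.mp hmul).resolve_left (by positivity)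
  have he2 : v*(u*w + 2*a1*a3 - 2*a2^2) - (a1*u + a3*w) = 0 := by
    have hmul : (q^2*v) * (v*(u*w + 2*a1*a3 - 2*a2^2) - (a1*u + a3*w)) = 0 := by
      linear_combination (-1)*hS2
        + (q^2*(u*w + 2*a1*a3 - 2*a2^2 - (a1*a2 + 2*a1*a3 + a2*a3)))*hv
        + (q^2*(a2*(a1+a3)))*hu + (q^2*(a2*(a1+a3)))*hw
    exact (mul_eq_zero.mp hmul).resolve_left (by positivity)
  have he3 : w*(u*v + 2*a1*a2 - 2*a3^2) - (a1*u + a2*v) = 0 := by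
    have hmul : w * (w*(u*v + 2*a1*a2 - 2*a3^2) - (a1*u + a2*v)) = 0 := by
      linear_combination (-u)*he1 + (-v)*he2
        + (v*w + 2*a2*a3 - 2*a1^2)*hu + (u*w + 2*a1*a3 - 2*a2^2)*hv
        + (u*v + 2*a1*a2 - 2*a3^2)*hw
    exact (mul_eq_zero.mp hmul).resolve_left (ne_of_gt hwp)
  -- some pair of the parameters is equal
  have hpair : a1 = a2 ∨ a1 = a3 ∨ a2 = a3 := by
    by_cases h12 : a1 = a2
    · exact Or.inl h12
    by_cases h13 : a1 = a3
    · exact Or.inr (Or.inl h13)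
    refine Or.inr (Or.inr ?_)
    have hd12 : (a1 - a2) * (v*(u+v)*(1 - 2*(a1+a2+a3)) - (a1 + 2*a2*a3 - 2*a1^2)) = 0 := by
      linear_combination (u+v)*he1 - (u+v)*he2 - (a1 + 2*a2*a3 - 2*a1^2)*hu
        + (a1 + 2*a2*a3 - 2*a1^2)*hv
    have hd13 : (a1 - a3) * (w*(u+w)*(1 - 2*(a1+a2+a3)) - (a1 + 2*a2*a3 - 2*a1^2)) = 0 := by
      linear_combination (u+w)*he1 - (u+w)*he3 - (a1 + 2*a2*a3 - 2*a1^2)*hu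
        + (a1 + 2*a2*a3 - 2*a1^2)*hw
    have hF1v : a1 + 2*a2*a3 - 2*a1^2 = v*(u+v)*(1 - 2*(a1+a2+a3)) := by
      have := (mul_eq_zero.mp hd12).resolve_left (sub_ne_zero.mpr h12)
      linarith
    have hF1w : a1 + 2*a2*a3 - 2*a1^2 = w*(u+w)*(1 - 2*(a1+a2+a3)) := by
      have := (mul_eq_zero.mp hd13).resolve_left (sub_ne_zero.mpr h13)
      linarith
    by_cases hS : 1 - 2*(a1+a2+a3) = 0
    · exfalso
      rw [hS, mul_zero] at hF1v
      nlinarith [mul_pos ha1p (add_pos ha2p ha3p), mul_pos ha2p ha3p]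
    · have hvw : v*(u+v) = w*(u+w) :=
        mul_right_cancel₀ hS (hF1v.symm.trans hF1w)
      have hz : (v - w)*(u+v+w) = 0 := by linear_combination hvw
      have hveqw : v = w := by
        have := (mul_eq_zero.mp hz).resolve_right (by positivity)
        linarith
      have hsq2 : v^2 = w^2 := by rw [hveqw]
      rw [hv, hw] at hsq2
      linarith
  -- handle the three cases
  rcases hpair with h12 | h13 | h23
  · -- a1 = a2 : use e1 with u = v
    subst h12
    have huv : u = v := by
      have hz : (u - v)*(u + v) = 0 := by linear_combination hu - hv
      have := (mul_eq_zero.mp hz).resolve_right (by positivity)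
      linarith
    by_cases h13 : a1 = a3
    · exact Or.inl ⟨rfl, h13⟩
    have hkey : a1 * (w - u*(1 + 2*a1 - 2*a3)) = 0 := by
      rw [← huv] at he1
      linear_combination he1 - w*hu
    have hwu : w = u*(1 + 2*a1 - 2*a3) := by
      have := (mul_eq_zero.mp hkey).resolve_left (ne_of_gt ha1p)
      linarith
    have hG : 2*a1 = (a1+a3)*(1+2*(a1-a3))^2 := by
      have h1 : w^2 = (u*(1 + 2*a1 - 2*a3))^2 := by rw [hwu]
      rw [hw, mul_pow, hu] at h1
      linear_combination h1
    obtain ⟨s, hs1, hs2, hsa, hsc⟩ := G_lemma a1 a3 ha1p ha3p ha3h hG h13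
    exact Or.inr ⟨s, hs1, hs2, Or.inl ⟨hsa, hsa, hsc⟩⟩
  · -- a1 = a3 : use e1 with u = w
    have huw : u = w := by
      have hz : (u - w)*(u + w) = 0 := by linear_combination hu - hw - h13
      have := (mul_eq_zero.mp hz).resolve_right (by positivity)
      linarith
    by_cases h12 : a1 = a2
    · exact Or.inl ⟨h12, h12.symm.trans h13⟩
    have hu' : u^2 = a2 + a1 := by rw [hu, ← h13]
    have hkey : a1 * (v - u*(1 + 2*a1 - 2*a2)) = 0 := by
      rw [← huw] at he1
      rw [← h13] at he1
      linear_combination he1 - v*hu'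
    have hvu : v = u*(1 + 2*a1 - 2*a2) := by
      have := (mul_eq_zero.mp hkey).resolve_left (ne_of_gt ha1p)
      linarith
    have hG : 2*a1 = (a1+a2)*(1+2*(a1-a2))^2 := by
      have h1 : v^2 = (u*(1 + 2*a1 - 2*a2))^2 := by rw [hvu]
      rw [hv, ← h13, mul_pow, hu'] at h1
      linear_combination h1
    obtain ⟨s, hs1, hs2, hsa, hsc⟩ := G_lemma a1 a2 ha1p ha2p ha2h hG h12
    exact Or.inr ⟨s, hs1, hs2, Or.inr (Or.inl ⟨hsa, h13.symm.trans hsa, hsc⟩)⟩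
  · -- a2 = a3 : use e2 with v = w
    have hvw : v = w := by
      have hz : (v - w)*(v + w) = 0 := by linear_combination hv - hw - h23
      have := (mul_eq_zero.mp hz).resolve_right (by positivity)
      linarith
    by_cases h12 : a1 = a2
    · exact Or.inl ⟨h12, h23⟩
    have hv' : v^2 = a1 + a2 := by rw [hv, ← h23]
    have hkey : a2 * (u - v*(1 + 2*a2 - 2*a1)) = 0 := by
      rw [← hvw] at he2
      rw [← h23] at he2
      linear_combination he2 - u*hv'
    have huv : u = v*(1 + 2*a2 - 2*a1) := by
      have := (mul_eq_zero.mp hkey).resolve_left (ne_of_gt ha2p)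
      linarith
    have hG : 2*a2 = (a2+a1)*(1+2*(a2-a1))^2 := by
      have h1 : u^2 = (v*(1 + 2*a2 - 2*a1))^2 := by rw [huv]
      rw [hu, ← h23, mul_pow, hv'] at h1
      linear_combination h1
    obtain ⟨s, hs1, hs2, hsa, hsc⟩ := G_lemma a2 a1 ha2p ha1p ha1h hG (fun h => h12 h.symm)
    exact Or.inr ⟨s, hs1, hs2, Or.inr (Or.inr ⟨hsa, h23.symm.trans hsa, hsc⟩)⟩
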